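/- If the MQMS system is strongly stable under some server allocation policy and the time-average arrival rate vector Ā = lim_{t→∞} (1/t) Σ_{τ=1}^t E[A(τ)] exists, then for every α ∈ ℝ^N with nonnegative entries, Σ_{n=1}^N α_n Ā_n ≤ b(α) = Σ_{s∈S} π_s · max_{I∈𝓘} Σ_{n=1}^N Σ_{k=1}^K α_n (C_s)_{n,k} I_{n,k}. -/

import Mathlib

open MeasureTheory ProbabilityTheory Finset Filter

noncomputable section

/-- Channel state space `S`: N×K matrices with entries in {0,…,M}. -/
abbrev ChanState (N K M : ℕ) := Fin N → Fin K → Fin (M + 1)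

/-- The real-valued channel matrix `C_s` of a channel state `s`. -/
def Cmat {N K M : ℕ} (s : ChanState N K M) : Fin N → Fin K → ℝ :=
  fun n k => ((s n k : ℕ) : ℝ)

/-- The 0/1 allocation matrix `I ∈ 𝓘` determined by an assignment `f` of servers to
queues: column `k` has its single 1 in row `f k`. -/
def allocMat {N K : ℕ} (f : Fin K → Fin N) : Fin N → Fin K → ℝ :=
  fun n k => if f k = n then 1 else 0

/-- The weight `Σ_n Σ_k α_n c_{n,k} I_{n,k}` of the allocation matrix `I = allocMat f`. -/
def weight {N K : ℕ} (α : Fin N → ℝ) (c : Fin N → Fin K → ℝ) (f : Fin K → Fin N) : ℝ :=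
  ∑ n, ∑ k, α n * c n k * allocMat f n k

/-- `max_{I ∈ 𝓘} Σ_n Σ_k α_n c_{n,k} I_{n,k}`. -/
def maxWeight {N K : ℕ} [NeZero N] (α : Fin N → ℝ) (c : Fin N → Fin K → ℝ) : ℝ :=
  Finset.univ.sup' Finset.univ_nonempty (weight α c)

/-- `b(α) = Σ_{s∈S} π_s max_{I∈𝓘} Σ_n Σ_k α_n (C_s)_{n,k} I_{n,k}`. -/
def bCoef {N K M : ℕ} [NeZero N] (π : ChanState N K M → ℝ) (α : Fin N → ℝ) : ℝ :=
  ∑ s : ChanState N K M, π s * maxWeight α (Cmat s)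

/-- The rate vector `R^{(g)}` of the deterministic policy `g`. -/
def rateVec {N K M : ℕ} (π : ChanState N K M → ℝ)
    (g : ChanState N K M → Fin K → Fin N) : Fin N → ℝ :=
  fun n => ∑ s : ChanState N K M, π s * ∑ k, Cmat s n k * allocMat (g s) n k

/-- The achievable-rate polytope `P`, the convex hull of the rate vectors of the
deterministic policies. -/
def ratePolytope {N K M : ℕ} (π : ChanState N K M → ℝ) : Set (Fin N → ℝ) :=
  convexHull ℝ {r | ∃ g : ChanState N K M → Fin K → Fin N, r = rateVec π g}

/-- `W`: products of N−1 factors from {0,…,M}, viewed inside ℝ. -/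
def Wset (N M : ℕ) : Set ℝ :=
  {w | ∃ m : Fin (N - 1) → ℕ, (∀ j, m j ≤ M) ∧ w = ∏ j, (m j : ℝ)}

/-- The set `V` of nonnegative weight vectors from the paper. -/
def Vset (N M : ℕ) : Set (Fin N → ℝ) :=
  {α | (∀ n, 0 ≤ α n) ∧
    ∀ U : Finset (Fin N), U.Nonempty → U ≠ Finset.univ →
      (∃ i ∈ U, α i ≠ 0) → (∃ j ∈ Uᶜ, α j ≠ 0) →
      ∃ i ∈ U, ∃ j ∈ Uᶜ, ∃ m ∈ Finset.Icc 1 M, ∃ n ∈ Finset.Icc 1 M,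
        0 < α i ∧ 0 < α j ∧ α i * (m : ℝ) = α j * (n : ℝ)}

/-- The product Bernoulli distribution on ON-OFF (M = 1) channel states. -/
def bernoulliPi {N K : ℕ} (p : Fin N → Fin K → ℝ) : ChanState N K 1 → ℝ :=
  fun s => ∏ n, ∏ k, (if (s n k : ℕ) = 1 then p n k else 1 - p n k)

end

lemma my_gauss (n : ℕ) : 2 * ∑ i ∈ Finset.range n, (i:ℝ) = (n:ℝ)^2 - n := by
  induction n with
  | zero => simp
  | succ n ih => rw [Finset.sum_range_succ]; push_cast; nlinarith [ih]

lemma my_exists_small (Y : ℕ → ℝ) (hY : ∀ t, 0 ≤ Y t) (B : ℝ)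
    (hB : ∀ t : ℕ, 1 ≤ t → (∑ τ ∈ Finset.range t, Y τ) ≤ B * t)
    {ε : ℝ} (hε : 0 < ε) (T : ℕ) : ∃ t : ℕ, T ≤ t ∧ 1 ≤ t ∧ Y t ≤ ε * t := by
  by_contra hcon
  push_neg at hcon
  set T' : ℕ := max T 1 with hT'
  have hkey : ∀ t : ℕ, T' ≤ t → ε * t < Y t := fun t ht =>
    hcon t (le_trans (le_max_left _ _) ht) (le_trans (le_max_right _ _) ht)
  set c : ℕ := ⌈B / ε⌉₊ with hcdef
  set t : ℕ := 2 * T' + 2 * c + 2 with htdef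
  have hT't : T' ≤ t := by omega
  have h1 : ∑ τ ∈ Finset.Ico T' t, (ε * (τ:ℝ)) ≤ ∑ τ ∈ Finset.Ico T' t, Y τ :=
    Finset.sum_le_sum (fun τ hτ => (hkey τ (Finset.mem_Ico.mp hτ).1).le)
  have h2 : ∑ τ ∈ Finset.Ico T' t, Y τ ≤ ∑ τ ∈ Finset.range t, Y τ := by
    apply Finset.sum_le_sum_of_subset_of_nonneg
    · intro x hx; rw [Finset.mem_range]; exact (Finset.mem_Ico.mp hx).2
    · intro i _ _; exact hY i
  have h3 := hB t (by omega)
  have h4 : ∑ τ ∈ Finset.Ico T' t, (ε * (τ:ℝ)) = ε * ((((t:ℝ)^2 - t) - ((T':ℝ)^2 - T'))/2) := by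
    rw [← Finset.mul_sum]
    congr 1
    rw [Finset.sum_Ico_eq_sub _ hT't]
    have g1 := my_gauss t; have g2 := my_gauss T'; linarith
  have hc : (B/ε) ≤ (c:ℝ) := Nat.le_ceil _
  have ht : (t:ℝ) = 2*(T':ℝ) + 2*(c:ℝ) + 2 := by push_cast [htdef]; ring
  have hT1 : (1:ℝ) ≤ (T':ℝ) := by exact_mod_cast (le_max_right T 1)
  have hc0 : (0:ℝ) ≤ (c:ℝ) := Nat.cast_nonneg c
  rw [h4] at h1
  have hBc : B ≤ ε * c := by rw [div_le_iff₀ hε] at hc; linarith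
  have hcl : B * t ≤ ε * c * t := by
    have : (0:ℝ) ≤ (t:ℝ) := by positivity
    nlinarith
  have hT0 : (0:ℝ) < (T':ℝ) := by linarith
  have hfin : ε * (((t:ℝ)^2 - t - ((T':ℝ)^2 - T'))/2) > ε * c * t := by
    rw [ht]
    nlinarith [mul_nonneg hε.le hc0, mul_pos hε hT0, mul_pos hε (mul_pos hT0 hT0),
      mul_nonneg (mul_nonneg hε.le hc0) hT0.le, mul_nonneg (mul_nonneg hε.le hc0) hc0, hε]
  linarith

lemma my_integral_comp_finite {Ω S : Type*} [MeasurableSpace Ω] (μ : Measure Ω)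
    [IsProbabilityMeasure μ]
    [Fintype S] [MeasurableSpace S] [MeasurableSingletonClass S]
    {C : Ω → S} (hC : Measurable C) (f : S → ℝ) (π : S → ℝ) (hπ0 : ∀ s, 0 ≤ π s)
    (hd : ∀ s, μ {ω | C ω = s} = ENNReal.ofReal (π s)) :
    Integrable (fun ω => f (C ω)) μ ∧ ∫ ω, f (C ω) ∂μ = ∑ s, π s * f s := by
  have hrw : (fun ω => f (C ω)) = fun ω => ∑ s : S, (C ⁻¹' {s}).indicator (fun _ => f s) ω := by
    funext ω
    rw [Finset.sum_eq_single_of_mem (C ω) (Finset.mem_univ _)]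
    · simp [Set.indicator]
    · intro b _ hb
      exact Set.indicator_of_notMem (by simpa using Ne.symm hb) _
  have hint : ∀ s : S, Integrable ((C ⁻¹' {s}).indicator (fun _ => f s)) μ :=
    fun s => (integrable_const (f s)).indicator (hC (measurableSet_singleton s))
  have hset : ∀ s : S, C ⁻¹' {s} = {ω | C ω = s} := by intro s; ext ω; simp
  constructor
  · rw [hrw]; exact integrable_finset_sum _ (fun s _ => hint s)
  · rw [hrw, integral_finset_sum _ (fun s _ => hint s)]
    refine Finset.sum_congr rfl fun s _ => ?_
    rw [integral_indicator_const _ (hC (measurableSet_singleton s)), hset s, measureReal_def, hd s,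
      ENNReal.toReal_ofReal (hπ0 s)]
    simp [mul_comm]

/-- under strong stability, the time-average mean arrival rate vector
satisfies the inequality Σ_n α_n Ā_n ≤ b(α) for every nonnegative weight vector α. -/
theorem stmt_2
    {N K M : ℕ} [NeZero N] [NeZero K] [NeZero M]
    (π : ChanState N K M → ℝ) (hπ0 : ∀ s, 0 ≤ π s) (hπ1 : ∑ s : ChanState N K M, π s = 1)
    {Ω : Type} [MeasurableSpace Ω] (μ : Measure Ω) [IsProbabilityMeasure μ]
    (X0 : Ω → Fin N → ℝ) (hX0m : Measurable X0) (hX0nn : ∀ ω n, 0 ≤ X0 ω n)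
    (hX0int : ∀ n, Integrable (fun ω => X0 ω n) μ)
    (A : ℕ → Ω → Fin N → ℝ) (hAm : ∀ t, Measurable (A t))
    (hAnn : ∀ t ω n, 0 ≤ A t ω n)
    (Amax : ℝ)
    (hA2int : ∀ t n, Integrable (fun ω => (A t ω n) ^ 2) μ)
    (hA2 : ∀ t n, ∫ ω, (A t ω n) ^ 2 ∂μ ≤ Amax ^ 2)
    (Cch : ℕ → Ω → ChanState N K M) (hCm : ∀ t, Measurable (Cch t))
    (hCdist : ∀ t, 1 ≤ t → ∀ s, μ {ω | Cch t ω = s} = ENNReal.ofReal (π s))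
    (Ipol : ℕ → Ω → Fin K → Fin N) (hIm : ∀ t, Measurable (Ipol t))
    (X : ℕ → Ω → Fin N → ℝ) (hX0eq : X 0 = X0)
    (hXrec : ∀ t, 1 ≤ t → ∀ ω n,
      X t ω n = max (X (t - 1) ω n - ∑ k, Cmat (Cch t ω) n k * allocMat (Ipol t ω) n k) 0
        + A t ω n)
    (hstable : ∀ n, ∃ B : ℝ, ∀ t : ℕ, 1 ≤ t →
      (∑ τ ∈ Finset.range t, ∫ ω, X τ ω n ∂μ) / t ≤ B)
    (Abar : Fin N → ℝ)
    (hAbar : ∀ n, Filter.Tendsto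
      (fun t : ℕ => (∑ τ ∈ Finset.Icc 1 t, ∫ ω, A τ ω n ∂μ) / t)
      Filter.atTop (nhds (Abar n)))
    (α : Fin N → ℝ) (hα : ∀ n, 0 ≤ α n) :
    ∑ n, α n * Abar n ≤ bCoef π α := by
  classical
  set serv : ℕ → Ω → Fin N → ℝ :=
    fun t ω n => ∑ k, Cmat (Cch t ω) n k * allocMat (Ipol t ω) n k with hserv
  -- serv measurable
  have hservm : ∀ t n, Measurable (fun ω => serv t ω n) := by
    intro t n
    apply Finset.measurable_sum
    intro k _
    exact ((measurable_of_countable (fun c : ChanState N K M => Cmat c n k)).comp (hCm t)).mul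
      ((measurable_of_countable (fun g : Fin K → Fin N => allocMat g n k)).comp (hIm t))
  -- serv bounds
  have hservb : ∀ t ω n, 0 ≤ serv t ω n ∧ serv t ω n ≤ (K : ℝ) * M := by
    intro t ω n
    constructor
    · apply Finset.sum_nonneg
      intro k _
      apply mul_nonneg
      · exact Nat.cast_nonneg _
      · unfold allocMat; positivity
    · calc serv t ω n ≤ ∑ _k : Fin K, (M : ℝ) := by
            apply Finset.sum_le_sum
            intro k _
            have h1 : Cmat (Cch t ω) n k ≤ (M:ℝ) := by
              unfold Cmat; exact_mod_cast Fin.is_le _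
            have h2 : allocMat (Ipol t ω) n k ≤ 1 := by unfold allocMat; split <;> norm_num
            have h3 : (0:ℝ) ≤ Cmat (Cch t ω) n k := Nat.cast_nonneg _
            have h4 : (0:ℝ) ≤ allocMat (Ipol t ω) n k := by unfold allocMat; positivity
            nlinarith
          _ = (K:ℝ) * M := by simp [Finset.sum_const, mul_comm]
  have hservint : ∀ t n, Integrable (fun ω => serv t ω n) μ := by
    intro t n
    refine (integrable_const ((K:ℝ) * M)).mono' (hservm t n).aestronglyMeasurable ?_
    refine Filter.Eventually.of_forall fun ω => ?_
    rw [Real.norm_eq_abs, abs_of_nonneg (hservb t ω n).1]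
    exact (hservb t ω n).2
  -- A integrable
  have hAint : ∀ t n, Integrable (fun ω => A t ω n) μ := by
    intro t n
    refine ((hA2int t n).add (integrable_const 1)).mono'
      ((measurable_pi_apply n).comp (hAm t)).aestronglyMeasurable ?_
    refine Filter.Eventually.of_forall fun ω => ?_
    rw [Real.norm_eq_abs, abs_of_nonneg (hAnn t ω n)]
    simp only [Pi.add_apply]
    nlinarith [sq_nonneg (A t ω n - 1), hAnn t ω n]
  -- X measurable & integrable & nonneg
  have hXm : ∀ t n, Measurable (fun ω => X t ω n) := by
    intro t
    induction t with
    | zero => intro n; rw [hX0eq]; exact (measurable_pi_apply n).comp hX0m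
    | succ t ih =>
      intro n
      have he : (fun ω => X (t+1) ω n)
          = fun ω => max (X t ω n - serv (t+1) ω n) 0 + A (t+1) ω n := by
        funext ω; rw [hXrec (t+1) (Nat.le_add_left 1 t) ω n]; simp [hserv]
      rw [he]
      exact (((ih n).sub (hservm (t+1) n)).max measurable_const).add
        ((measurable_pi_apply n).comp (hAm (t+1)))
  have hXint : ∀ t n, Integrable (fun ω => X t ω n) μ := by
    intro t
    induction t with
    | zero => intro n; rw [hX0eq]; exact hX0int n
    | succ t ih =>
      intro n
      have he : (fun ω => X (t+1) ω n)
          = fun ω => max (X t ω n - serv (t+1) ω n) 0 + A (t+1) ω n := by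
        funext ω; rw [hXrec (t+1) (Nat.le_add_left 1 t) ω n]; simp [hserv]
      rw [he]
      exact (((ih n).sub (hservint (t+1) n)).sup (integrable_const 0)).add (hAint (t+1) n)
  have hXnn : ∀ t ω n, 0 ≤ X t ω n := by
    intro t
    induction t with
    | zero => intro ω n; rw [hX0eq]; exact hX0nn ω n
    | succ t _ =>
      intro ω n
      rw [hXrec (t+1) (Nat.le_add_left 1 t) ω n]
      exact add_nonneg (le_max_right _ 0) (hAnn (t+1) ω n)
  -- expectation quantities
  set EX : ℕ → ℝ := fun t => ∫ ω, (∑ n, α n * X t ω n) ∂μ with hEX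
  set EA : ℕ → ℝ := fun t => ∫ ω, (∑ n, α n * A t ω n) ∂μ with hEA
  have hEXint : ∀ t, Integrable (fun ω => ∑ n, α n * X t ω n) μ :=
    fun t => integrable_finset_sum _ (fun n _ => (hXint t n).const_mul (α n))
  have hEAint : ∀ t, Integrable (fun ω => ∑ n, α n * A t ω n) μ :=
    fun t => integrable_finset_sum _ (fun n _ => (hAint t n).const_mul (α n))
  have hMW := fun (t : ℕ) (ht : 1 ≤ t) =>
    my_integral_comp_finite μ (hCm t) (fun s => maxWeight α (Cmat s)) π hπ0 (hCdist t ht)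
  -- step inequality
  have hstep : ∀ t : ℕ, EX t + EA (t+1) - bCoef π α ≤ EX (t+1) := by
    intro t
    have hpt : ∀ ω, (∑ n, α n * X t ω n) - maxWeight α (Cmat (Cch (t+1) ω))
        + (∑ n, α n * A (t+1) ω n) ≤ ∑ n, α n * X (t+1) ω n := by
      intro ω
      have hW : ∑ n, α n * serv (t+1) ω n
          = weight α (Cmat (Cch (t+1) ω)) (Ipol (t+1) ω) := by
        unfold weight
        simp [hserv, Finset.mul_sum, mul_assoc]
      have hWle : weight α (Cmat (Cch (t+1) ω)) (Ipol (t+1) ω)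
          ≤ maxWeight α (Cmat (Cch (t+1) ω)) :=
        Finset.le_sup' _ (Finset.mem_univ _)
      have h1 : ∀ n, α n * (X t ω n - serv (t+1) ω n + A (t+1) ω n) ≤ α n * X (t+1) ω n := by
        intro n
        apply mul_le_mul_of_nonneg_left _ (hα n)
        rw [hXrec (t+1) (Nat.le_add_left 1 t) ω n]
        simp only [Nat.add_sub_cancel]
        have := le_max_left (X t ω n - serv (t+1) ω n) 0
        linarith
      calc (∑ n, α n * X t ω n) - maxWeight α (Cmat (Cch (t+1) ω)) + (∑ n, α n * A (t+1) ω n)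
          ≤ (∑ n, α n * X t ω n) - (∑ n, α n * serv (t+1) ω n) + (∑ n, α n * A (t+1) ω n) := by
            rw [hW]; linarith
        _ = ∑ n, α n * (X t ω n - serv (t+1) ω n + A (t+1) ω n) := by
            rw [← Finset.sum_sub_distrib, ← Finset.sum_add_distrib]
            congr 1; funext n; ring
        _ ≤ ∑ n, α n * X (t+1) ω n := Finset.sum_le_sum (fun n _ => h1 n)
    have hintL : Integrable (fun ω => (∑ n, α n * X t ω n)
        - maxWeight α (Cmat (Cch (t+1) ω)) + (∑ n, α n * A (t+1) ω n)) μ :=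
      (((hEXint t).sub (hMW (t+1) (Nat.le_add_left 1 t)).1).add (hEAint (t+1)))
    have hle := integral_mono hintL (hEXint (t+1)) hpt
    have hintsub : Integrable (fun ω => (∑ n, α n * X t ω n)
        - maxWeight α (Cmat (Cch (t+1) ω))) μ :=
      (hEXint t).sub (hMW (t+1) (Nat.le_add_left 1 t)).1
    have hadd : ∫ ω, ((∑ n, α n * X t ω n) - maxWeight α (Cmat (Cch (t+1) ω))
          + (∑ n, α n * A (t+1) ω n)) ∂μ
        = (∫ ω, ((∑ n, α n * X t ω n) - maxWeight α (Cmat (Cch (t+1) ω))) ∂μ)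
          + ∫ ω, (∑ n, α n * A (t+1) ω n) ∂μ :=
      integral_add hintsub (hEAint (t+1))
    have hsub : ∫ ω, ((∑ n, α n * X t ω n) - maxWeight α (Cmat (Cch (t+1) ω))) ∂μ
        = (∫ ω, (∑ n, α n * X t ω n) ∂μ) - ∫ ω, maxWeight α (Cmat (Cch (t+1) ω)) ∂μ :=
      integral_sub (hEXint t) (hMW (t+1) (Nat.le_add_left 1 t)).1
    have hmw := (hMW (t+1) (Nat.le_add_left 1 t)).2
    simp only [hEX, hEA, bCoef]
    linarith
  have hEXnn : ∀ t, 0 ≤ EX t := by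
    intro t
    apply integral_nonneg
    intro ω
    exact Finset.sum_nonneg fun n _ => mul_nonneg (hα n) (hXnn t ω n)
  -- telescoped bound
  have hTel : ∀ t : ℕ, (∑ τ ∈ Finset.Icc 1 t, EA τ) ≤ EX t + t * bCoef π α := by
    intro t
    induction t with
    | zero => simpa using hEXnn 0
    | succ t ih =>
      rw [Finset.sum_Icc_succ_top (Nat.le_add_left 1 t)]
      have := hstep t
      push_cast
      linarith
  -- stability: sum bound on EX
  choose Bf hBf using hstable
  set B : ℝ := ∑ n, α n * Bf n with hB
  have hYsum : ∀ t : ℕ, 1 ≤ t → (∑ τ ∈ Finset.range t, EX τ) ≤ B * t := by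
    intro t ht
    have htpos : (0:ℝ) < t := by exact_mod_cast ht
    have hEXeq : ∀ τ, EX τ = ∑ n, α n * ∫ ω, X τ ω n ∂μ := by
      intro τ
      simp only [hEX]
      rw [integral_finset_sum _ (fun n _ => (hXint τ n).const_mul (α n))]
      exact Finset.sum_congr rfl fun n _ => integral_const_mul _ _
    calc (∑ τ ∈ Finset.range t, EX τ)
        = ∑ n, α n * (∑ τ ∈ Finset.range t, ∫ ω, X τ ω n ∂μ) := by
          simp only [hEXeq]
          rw [Finset.sum_comm]
          exact Finset.sum_congr rfl fun n _ => (Finset.mul_sum _ _ _).symm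
      _ ≤ ∑ n, α n * (Bf n * t) := by
          apply Finset.sum_le_sum
          intro n _
          apply mul_le_mul_of_nonneg_left _ (hα n)
          have := hBf n t ht
          rw [div_le_iff₀ htpos] at this
          linarith
      _ = B * t := by rw [hB, Finset.sum_mul]; exact Finset.sum_congr rfl fun n _ => by ring
  -- limit of average of EA
  set L : ℝ := ∑ n, α n * Abar n with hL
  have hEAeq : ∀ τ, EA τ = ∑ n, α n * ∫ ω, A τ ω n ∂μ := by
    intro τ
    simp only [hEA]
    rw [integral_finset_sum _ (fun n _ => (hAint τ n).const_mul (α n))]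
    exact Finset.sum_congr rfl fun n _ => integral_const_mul _ _
  have havg : Tendsto (fun t : ℕ => (∑ τ ∈ Finset.Icc 1 t, EA τ) / t) atTop (nhds L) := by
    have : (fun t : ℕ => (∑ τ ∈ Finset.Icc 1 t, EA τ) / t)
        = fun t : ℕ => ∑ n, α n * ((∑ τ ∈ Finset.Icc 1 t, ∫ ω, A τ ω n ∂μ) / t) := by
      funext t
      simp only [hEAeq]
      rw [Finset.sum_comm, Finset.sum_div]
      exact Finset.sum_congr rfl fun n _ => by rw [← Finset.mul_sum, mul_div_assoc]
    rw [this, hL]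
    exact tendsto_finset_sum _ (fun n _ => (hAbar n).const_mul (α n))
  -- conclude
  have key : ∀ ε : ℝ, 0 < ε → L ≤ bCoef π α + ε := by
    intro ε hε
    have hε3 : 0 < ε / 3 := by linarith
    have hev : ∀ᶠ t : ℕ in atTop, L - ε/3 < (∑ τ ∈ Finset.Icc 1 t, EA τ) / t :=
      havg.eventually (eventually_gt_nhds (by linarith))
    rw [eventually_atTop] at hev
    obtain ⟨T0, hT0⟩ := hev
    obtain ⟨t, htT0, ht1, htsmall⟩ := my_exists_small EX hEXnn B hYsum hε3 T0
    have htpos : (0:ℝ) < t := by exact_mod_cast ht1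
    have h5 : (∑ τ ∈ Finset.Icc 1 t, EA τ) / t ≤ ε/3 + bCoef π α := by
      rw [div_le_iff₀ htpos]
      have := hTel t
      nlinarith
    have := hT0 t htT0
    linarith
  linarith [le_of_forall_pos_le_add key]
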